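/- The number f(n,m) of closed walks of length n and weight m in the transfer digraph G (equivalently the coefficient of x^m z^n in F(z,x) = (U−V−V′)/(1−U+V) with U=((p+1)/2)(1+x)z, V=pxz², where F = −z∂_z Q / Q and Q = 1−((p+1)/2)(1+x)z+pxz²) is given by f(n,m) = Σ_i (n/(n−i))·C(n−i,i)·C(n−2i, m−i)·(−p)^i·((p+1)/2)^{n−2i}, and satisfies f(n,m) = f(n,n−m). -/

import Mathlib

open Polynomial Matrix Finset

section Paths
variable {R : Type*} [CommRing R] {κ : Type*} [Fintype κ] [DecidableEq κ]

lemma pow_apply_paths (A : Matrix κ κ R) : ∀ (k : ℕ) (i j : κ),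
    (A ^ k) i j = ∑ γ : Fin (k+1) → κ,
      (if γ 0 = i ∧ γ (Fin.last k) = j then ∏ t : Fin k, A (γ t.castSucc) (γ t.succ) else 0) := by
  intro k
  induction k with
  | zero =>
    intro i j
    have h := Fintype.sum_equiv (Equiv.funUnique (Fin 1) κ)
      (fun γ : Fin 1 → κ => if γ 0 = i ∧ γ (Fin.last 0) = j then
        (∏ t : Fin 0, A (γ t.castSucc) (γ t.succ)) else 0)
      (fun x => if x = i ∧ x = j then 1 else 0) (by intro γ; simp)
    rw [pow_zero, h, Matrix.one_apply]
    simp [ite_and, Finset.sum_ite_eq']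
  | succ k ih =>
    intro i j
    have h := Fintype.sum_equiv (Fin.snocEquiv (fun _ : Fin (k+2) => κ))
      (fun x : κ × (Fin (k+1) → κ) =>
        if (Fin.snoc x.2 x.1 : Fin (k+2) → κ) 0 = i ∧ (Fin.snoc x.2 x.1 : Fin (k+2) → κ) (Fin.last (k+1)) = j then
          ∏ t : Fin (k+1), A ((Fin.snoc x.2 x.1 : Fin (k+2) → κ) t.castSucc) ((Fin.snoc x.2 x.1 : Fin (k+2) → κ) t.succ)
        else 0)
      (fun γ : Fin (k+2) → κ => if γ 0 = i ∧ γ (Fin.last (k+1)) = j then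
        ∏ t : Fin (k+1), A (γ t.castSucc) (γ t.succ) else 0)
      (by intro x; rfl)
    rw [pow_succ, Matrix.mul_apply, ← h]
    rw [Fintype.sum_prod_type_right]
    have h0 : ∀ (y : Fin (k+1) → κ) (x : κ), (Fin.snoc y x : Fin (k+2) → κ) 0 = y 0 := by
      intro y x
      have : (0 : Fin (k+2)) = Fin.castSucc 0 := rfl
      rw [this, Fin.snoc_castSucc]
    have hprod : ∀ (y : Fin (k+1) → κ) (x : κ),
        (∏ t : Fin (k+1), A ((Fin.snoc y x : Fin (k+2) → κ) t.castSucc)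
          ((Fin.snoc y x : Fin (k+2) → κ) t.succ))
        = (∏ s : Fin k, A (y s.castSucc) (y s.succ)) * A (y (Fin.last k)) x := by
      intro y x
      rw [Fin.prod_univ_castSucc]
      simp [Fin.succ_castSucc, Fin.succ_last, Fin.snoc_castSucc, Fin.snoc_last, -Fin.castSucc_succ]
    simp only [h0, hprod, Fin.snoc_last]
    have inner_eq : ∀ y : Fin (k+1) → κ,
        (∑ x : κ, if y 0 = i ∧ x = j then
          (∏ s : Fin k, A (y s.castSucc) (y s.succ)) * A (y (Fin.last k)) x else 0)
        = if y 0 = i then (∏ s : Fin k, A (y s.castSucc) (y s.succ)) * A (y (Fin.last k)) j else 0 := by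
      intro y
      by_cases hy : y 0 = i <;> simp [hy]
    simp only [inner_eq]
    simp only [ih, Finset.sum_mul]
    rw [Finset.sum_comm]
    apply Finset.sum_congr rfl
    intro y _
    have : ∀ j1 : κ, (if y 0 = i ∧ y (Fin.last k) = j1 then ∏ t : Fin k, A (y t.castSucc) (y t.succ) else 0) * A j1 j
        = if y 0 = i ∧ y (Fin.last k) = j1 then (∏ t : Fin k, A (y t.castSucc) (y t.succ)) * A j1 j else 0 := by
      intro j1; split <;> simp
    simp only [this]
    by_cases hy : y 0 = i <;> simp [hy]

lemma trace_pow_cyclic (A : Matrix κ κ R) (k : ℕ) :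
    (A ^ (k+1)).trace = ∑ δ : Fin (k+1) → κ, ∏ t : Fin (k+1), A (δ t) (δ (t + 1)) := by
  rw [Matrix.trace]
  simp only [Matrix.diag, pow_apply_paths]
  rw [Finset.sum_comm]
  have step1 : ∀ γ : Fin (k+2) → κ,
      (∑ i : κ, if γ 0 = i ∧ γ (Fin.last (k+1)) = i then
        ∏ t : Fin (k+1), A (γ t.castSucc) (γ t.succ) else 0)
      = if γ (Fin.last (k+1)) = γ 0 then ∏ t : Fin (k+1), A (γ t.castSucc) (γ t.succ) else 0 := by
    intro γ
    rw [Finset.sum_eq_single (γ 0)]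
    · by_cases hg : γ (Fin.last (k+1)) = γ 0 <;> simp [hg]
    · intro i _ hi
      exact if_neg (fun h => hi h.1.symm)
    · simp
  simp only [step1]
  rw [← Finset.sum_filter]
  symm
  apply Finset.sum_nbij' (i := fun δ : Fin (k+1) → κ => (Fin.snoc δ (δ 0) : Fin (k+2) → κ))
    (j := fun γ : Fin (k+2) → κ => γ ∘ Fin.castSucc)
  · intro δ _
    simp [Fin.snoc_last]
  · intro γ hγ
    exact Finset.mem_univ _
  · intro δ _
    funext t
    simp [Fin.snoc_castSucc]
  · intro γ hγ
    simp only [Finset.mem_filter, Finset.mem_univ, true_and] at hγ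
    funext t
    refine Fin.lastCases ?_ ?_ t
    · simp only [Fin.snoc_last, Function.comp]
      show γ 0 = γ (Fin.last (k+1))
      exact hγ.symm
    · intro s
      simp [Fin.snoc_castSucc, Function.comp]
  · intro δ _
    apply Finset.prod_congr rfl
    intro t _
    refine Fin.lastCases ?_ ?_ t
    · rw [Fin.snoc_castSucc, Fin.succ_last, Fin.snoc_last, Fin.last_add_one]
    · intro s
      rw [Fin.snoc_castSucc, Fin.succ_castSucc, Fin.snoc_castSucc]
      congr 2
      ext
      rw [Fin.val_add_one]
      rw [if_neg (Fin.ne_last_of_lt (Fin.castSucc_lt_last s))]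
      simp

end Paths


/-- The arc relation of the transfer digraph `G` on `[p] × {0,1}`: there is an
arc from `(α,γ)` to `(α′,γ′)` iff `α + (p−1)/2 + γ = β + pγ′` for some `β ∈ [p]`.
The weight of such an arc is the outgoing carry `γ′`. -/
def transferArc (p : ℕ) (v w : Fin p × Fin 2) : Prop :=
  ∃ β : Fin p, (v.1 : ℕ) + (p - 1) / 2 + (v.2 : ℕ) = (β : ℕ) + p * (w.2 : ℕ)

/-- `f(n,m)`: the number of closed walks of length `n` and weight `m` in the
transfer digraph `G` (a closed walk of length `n` is recorded by its sequence of
`n` vertices, indexed cyclically; its weight is the sum of the weights of its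
arcs). -/
noncomputable def closedWalkCount (p n m : ℕ) [NeZero n] : ℕ :=
  Nat.card {v : Fin n → Fin p × Fin 2 //
    (∀ i : Fin n, transferArc p (v i) (v (i + 1))) ∧
      (∑ i : Fin n, ((v (i + 1)).2 : ℕ)) = m}


def tcarry (p : ℕ) (v : Fin p × Fin 2) : Fin 2 :=
  if p ≤ (v.1 : ℕ) + (p - 1) / 2 + (v.2 : ℕ) then 1 else 0

def Ncnt (b : ℕ) (x y : Fin 2) : ℕ := if x = y then b + 1 else b

lemma transferArc_iff (p : ℕ) (hp : 1 ≤ p) (v w : Fin p × Fin 2) :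
    transferArc p v w ↔ w.2 = tcarry p v := by
  have hc : (p - 1) / 2 ≤ p - 1 := Nat.div_le_self _ _
  have hv1 : (v.1 : ℕ) < p := v.1.isLt
  have hv2 : (v.2 : ℕ) < 2 := v.2.isLt
  have hw2 : (w.2 : ℕ) < 2 := w.2.isLt
  unfold transferArc tcarry
  by_cases hs : p ≤ (v.1 : ℕ) + (p - 1) / 2 + (v.2 : ℕ)
  · rw [if_pos hs]
    constructor
    · rintro ⟨β, hβ⟩
      have hb : (β : ℕ) < p := β.isLt
      obtain h2 | h2 : (w.2 : ℕ) = 0 ∨ (w.2 : ℕ) = 1 := by omega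
      · rw [h2, mul_zero] at hβ; omega
      · exact Fin.ext (by simpa using h2)
    · intro h
      have h2 : (w.2 : ℕ) = 1 := by rw [h]; rfl
      refine ⟨⟨(v.1 : ℕ) + (p - 1) / 2 + (v.2 : ℕ) - p, by omega⟩, ?_⟩
      have hβv : ((⟨(v.1 : ℕ) + (p - 1) / 2 + (v.2 : ℕ) - p, by omega⟩ : Fin p) : ℕ)
          = (v.1 : ℕ) + (p - 1) / 2 + (v.2 : ℕ) - p := rfl
      rw [hβv, h2, mul_one]
      omega
  · rw [if_neg hs]
    constructor
    · rintro ⟨β, hβ⟩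
      have hb : (β : ℕ) < p := β.isLt
      obtain h2 | h2 : (w.2 : ℕ) = 0 ∨ (w.2 : ℕ) = 1 := by omega
      · exact Fin.ext (by simpa using h2)
      · rw [h2, mul_one] at hβ; omega
    · intro h
      have h2 : (w.2 : ℕ) = 0 := by rw [h]; rfl
      refine ⟨⟨(v.1 : ℕ) + (p - 1) / 2 + (v.2 : ℕ), by omega⟩, ?_⟩
      have hβv : ((⟨(v.1 : ℕ) + (p - 1) / 2 + (v.2 : ℕ), by omega⟩ : Fin p) : ℕ)
          = (v.1 : ℕ) + (p - 1) / 2 + (v.2 : ℕ) := rfl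
      rw [hβv, h2, mul_zero]
      omega

lemma card_ge (p c : ℕ) (hc : c ≤ p) :
    (Finset.univ.filter (fun α : Fin p => p ≤ (α : ℕ) + c)).card = c := by
  have := Finset.card_bij' (s := Finset.univ.filter (fun α : Fin p => p ≤ (α : ℕ) + c))
    (t := Finset.Ico (p - c) p)
    (i := fun α _ => (α : ℕ))
    (j := fun x hx => (⟨x, (Finset.mem_Ico.mp hx).2⟩ : Fin p))
    (hi := by intro α hα; simp only [Finset.mem_filter, Finset.mem_univ, true_and] at hα
              show (α : ℕ) ∈ Finset.Ico (p - c) p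
              rw [Finset.mem_Ico]; exact ⟨by omega, α.isLt⟩)
    (hj := by intro x hx; simp only [Finset.mem_Ico] at hx
              show (⟨x, hx.2⟩ : Fin p) ∈ _
              simp only [Finset.mem_filter, Finset.mem_univ, true_and]; omega)
    (left_inv := by intro α hα; rfl)
    (right_inv := by intro x hx; rfl)
  rw [this, Nat.card_Ico]
  omega

lemma card_lt (p c : ℕ) (hc : c ≤ p) :
    (Finset.univ.filter (fun α : Fin p => ¬ p ≤ (α : ℕ) + c)).card = p - c := by
  have h1 := Finset.card_filter_add_card_filter_not
    (s := (Finset.univ : Finset (Fin p))) (p := fun α : Fin p => p ≤ (α : ℕ) + c)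
  rw [card_ge p c hc] at h1
  simp only [Finset.card_univ, Fintype.card_fin] at h1
  omega

lemma ite_fin2_eq_zero (c : Prop) [Decidable c] :
    ((if c then (1 : Fin 2) else 0) = 0) ↔ ¬ c := by
  split_ifs with h <;> simp [h]

lemma ite_fin2_eq_one (c : Prop) [Decidable c] :
    ((if c then (1 : Fin 2) else 0) = 1) ↔ c := by
  split_ifs with h <;> simp [h]

lemma card_carry (p b : ℕ) (hpb : p = 2 * b + 1) (g g' : Fin 2) :
    Fintype.card {α : Fin p // tcarry p (α, g) = g'} = Ncnt b g g' := by
  have hb : (p - 1) / 2 = b := by omega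
  rw [Fintype.card_subtype]
  unfold Ncnt
  fin_cases g <;> fin_cases g' <;> simp only [tcarry, hb, Fin.mk_zero, Fin.mk_one]
  · rw [if_pos trivial, Finset.filter_congr (fun α _ => ite_fin2_eq_zero _)]
    simp only [add_zero]
    rw [card_lt p b (by omega)]
    omega
  · rw [if_neg (by decide), Finset.filter_congr (fun α _ => ite_fin2_eq_one _)]
    simp only [add_zero]
    exact card_ge p b (by omega)
  · rw [if_neg (by decide), Finset.filter_congr (fun α _ => ite_fin2_eq_zero _)]
    rw [Finset.filter_congr (fun (α : Fin p) _ => (by rw [add_assoc] :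
      (¬p ≤ (α:ℕ) + b + 1) ↔ (¬p ≤ (α:ℕ) + (b+1))))]
    rw [card_lt p (b + 1) (by omega)]
    omega
  · rw [if_pos trivial, Finset.filter_congr (fun α _ => ite_fin2_eq_one _)]
    rw [Finset.filter_congr (fun (α : Fin p) _ => (by rw [add_assoc] :
      (p ≤ (α:ℕ) + b + 1) ↔ (p ≤ (α:ℕ) + (b+1))))]
    exact card_ge p (b + 1) (by omega)

lemma count_eq (p b n m : ℕ) (hpb : p = 2 * b + 1) [NeZero n] :
    closedWalkCount p n m =
      ∑ γ ∈ Finset.univ.filter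
          (fun γ : Fin n → Fin 2 => (∑ i : Fin n, ((γ (i + 1)) : ℕ)) = m),
        ∏ i : Fin n, Ncnt b (γ i) (γ (i + 1)) := by
  classical
  have hp1 : 1 ≤ p := by omega
  rw [closedWalkCount, Nat.card_eq_fintype_card, Fintype.card_subtype]
  rw [Finset.filter_congr (fun (v : Fin n → Fin p × Fin 2) _ =>
    and_congr_left' (forall_congr' (fun i => transferArc_iff p hp1 (v i) (v (i + 1)))))]
  rw [Finset.card_eq_sum_card_fiberwise (f := fun (v : Fin n → Fin p × Fin 2) (i : Fin n) => (v i).2)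
    (t := Finset.univ.filter
      (fun γ : Fin n → Fin 2 => (∑ i : Fin n, ((γ (i + 1)) : ℕ)) = m))
    (by
      intro v hv
      simp only [Finset.mem_coe, Finset.mem_filter, Finset.mem_univ, true_and]
      exact (Finset.mem_filter.mp hv).2.2)]
  apply Finset.sum_congr rfl
  intro γ hγ
  simp only [Finset.mem_filter, Finset.mem_univ, true_and] at hγ
  rw [Finset.filter_filter]
  rw [← Fintype.card_subtype]
  have e : {v : Fin n → Fin p × Fin 2 //
      ((∀ i, (v (i + 1)).2 = tcarry p (v i)) ∧ (∑ i : Fin n, ((v (i + 1)).2 : ℕ)) = m) ∧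
        (fun i => (v i).2) = γ} ≃
      (∀ i : Fin n, {α : Fin p // tcarry p (α, γ i) = γ (i + 1)}) := by
    refine ⟨fun v i => ⟨(v.1 i).1, ?_⟩, fun αs => ⟨fun i => ((αs i : Fin p), γ i), ?_, ?_⟩, ?_, ?_⟩
    · have hA := v.2.1.1 i
      have hC := congrFun v.2.2
      have : ((v.1 i).1, γ i) = v.1 i := by
        rw [← hC i]
      rw [this, ← hA, hC]
    · constructor
      · intro i
        exact (αs (i : Fin n)).2.symm
      · exact hγ
    · rfl
    · intro v
      apply Subtype.ext
      funext i
      exact Prod.ext rfl (congrFun v.2.2 i).symm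
    · intro αs
      funext i
      apply Subtype.ext
      rfl
  rw [Fintype.card_congr e, Fintype.card_pi]
  exact Finset.prod_congr rfl (fun i _ => card_carry p b hpb (γ i) (γ (i + 1)))


noncomputable def cQ (n i : ℕ) : ℚ := (n : ℚ) / ((n : ℚ) - (i : ℚ)) * ((n - i).choose i : ℚ)

lemma cQ_zero (n : ℕ) (hn : 1 ≤ n) : cQ n 0 = 1 := by
  unfold cQ
  have : (n : ℚ) ≠ 0 := by exact_mod_cast (by omega : n ≠ 0)
  simp [div_self this]

lemma cQ_eq (n i : ℕ) (h1 : 1 ≤ i) (h2 : i < n) :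
    cQ n i = ((n - i).choose i : ℚ) + ((n - i - 1).choose (i - 1) : ℚ) := by
  unfold cQ
  have hni : (n : ℚ) - (i : ℚ) = ((n - i : ℕ) : ℚ) := by
    push_cast [Nat.cast_sub h2.le]; ring
  have hne : ((n - i : ℕ) : ℚ) ≠ 0 := by
    have : 0 < n - i := by omega
    exact_mod_cast this.ne'
  rw [hni, div_mul_eq_mul_div, div_eq_iff hne]
  have key : (n - i) * ((n - i - 1).choose (i - 1)) = (n - i).choose i * i := by
    have := Nat.add_one_mul_choose_eq (n - i - 1) (i - 1)
    have e1 : n - i - 1 + 1 = n - i := by omega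
    have e2 : i - 1 + 1 = i := by omega
    rwa [e1, e2] at this
  have keyQ : ((n : ℚ) - (i : ℚ)) * ((n - i - 1).choose (i - 1) : ℚ)
      = ((n - i).choose i : ℚ) * (i : ℚ) := by
    rw [hni]; exact_mod_cast key
  have : (n : ℚ) = ((n:ℚ) - (i:ℚ)) + (i:ℚ) := by ring
  rw [this]
  rw [hni] at keyQ ⊢
  ring_nf
  ring_nf at keyQ
  nlinarith [keyQ]

lemma cQ_eq_zero (n i : ℕ) (hi : 1 ≤ i) (h : n < 2 * i) : cQ n i = 0 := by
  unfold cQ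
  rw [Nat.choose_eq_zero_of_lt (by omega)]
  simp

lemma cQ_one (n : ℕ) (hn : 2 ≤ n) : cQ n 1 = (n : ℚ) := by
  unfold cQ
  rw [Nat.choose_one_right]
  have h1 : ((n - 1 : ℕ) : ℚ) = (n : ℚ) - 1 := by
    push_cast [Nat.cast_sub (by omega : 1 ≤ n)]; ring
  have hne : (n : ℚ) - 1 ≠ 0 := by
    have h2 : ((n - 1 : ℕ) : ℚ) ≠ 0 := by exact_mod_cast (by omega : n - 1 ≠ 0)
    rwa [h1] at h2
  rw [h1]
  field_simp
  rw [Nat.cast_one, div_self hne]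

lemma cQ_rec (n i : ℕ) (hn : 1 ≤ n) (hi : 1 ≤ i) :
    cQ (n + 2) i = cQ (n + 1) i + cQ n (i - 1) := by
  rcases eq_or_lt_of_le hi with h1 | h1
  · -- i = 1
    rw [← h1]
    rw [cQ_one (n+2) (by omega), cQ_one (n+1) (by omega)]
    simp only [Nat.sub_self, cQ_zero n hn]
    push_cast; ring
  · rcases le_or_gt i n with h2 | h2
    · -- 2 ≤ i ≤ n
      obtain ⟨a, rfl⟩ : ∃ a, i = a + 2 := ⟨i - 2, by omega⟩
      obtain ⟨d, rfl⟩ : ∃ d, n = (a + 2) + d := ⟨n - (a+2), by omega⟩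
      rw [cQ_eq _ _ (by omega) (by omega), cQ_eq _ _ (by omega) (by omega),
        cQ_eq _ _ (by omega) (by omega)]
      have e1 : a + 2 + d + 2 - (a + 2) = d + 2 := by omega
      have e2 : a + 2 + d + 2 - (a + 2) - 1 = d + 1 := by omega
      have e3 : a + 2 + d + 1 - (a + 2) = d + 1 := by omega
      have e4 : a + 2 + d + 1 - (a + 2) - 1 = d := by omega
      have e5 : a + 2 + d - (a + 2 - 1) = d + 1 := by omega
      have e6 : a + 2 + d - (a + 2 - 1) - 1 = d := by omega
      have e7 : a + 2 - 1 = a + 1 := by omega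
      have e8 : a + 1 - 1 = a := by omega
      rw [e2, e1, e4, e3, e6, e5, e7, e8]
      have p1 : (d + 2).choose (a + 2) = (d+1).choose (a+1) + (d+1).choose (a+2) :=
        Nat.choose_succ_succ _ _
      have p2 : (d + 1).choose (a + 1) = d.choose a + d.choose (a+1) :=
        Nat.choose_succ_succ _ _
      push_cast [p1, p2]
      ring
    · -- i > n
      rw [cQ_eq_zero (n+2) i (by omega) (by omega),
        cQ_eq_zero (n+1) i (by omega) (by omega),
        cQ_eq_zero n (i-1) (by omega) (by omega)]
      ring

noncomputable def e1p (b : ℕ) : ℚ[X] := C ((b : ℚ) + 1) * (1 + X)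
noncomputable def e2p (b : ℕ) : ℚ[X] := C (2 * (b : ℚ) + 1) * X

noncomputable def tP (b N i : ℕ) : ℚ[X] := C (cQ N i) * (-(e2p b)) ^ i * (e1p b) ^ (N - 2 * i)

noncomputable def Pn (b n : ℕ) : ℚ[X] := ∑ i ∈ Finset.range (n + 1), tP b n i

lemma tP_zero_coeff (b N i : ℕ) (h : cQ N i = 0) : tP b N i = 0 := by
  rw [tP, h, map_zero, zero_mul, zero_mul]

lemma Pn_rec (b n : ℕ) (hn : 1 ≤ n) :
    Pn b (n + 2) = e1p b * Pn b (n + 1) - e2p b * Pn b n := by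
  have hext1 : Pn b (n + 2) = ∑ i ∈ Finset.range (n + 3), tP b (n + 2) i := rfl
  have hext2 : Pn b (n + 1) = ∑ i ∈ Finset.range (n + 3), tP b (n + 1) i := by
    rw [Pn]
    apply Finset.sum_subset (Finset.range_subset_range.mpr (by omega))
    intro i hi hni
    simp only [Finset.mem_range] at hi hni
    exact tP_zero_coeff _ _ _ (cQ_eq_zero _ _ (by omega) (by omega))
  have hshift : Pn b n = ∑ i ∈ Finset.range (n + 3),
      (if 1 ≤ i then tP b n (i - 1) else 0) := by
    rw [Pn]
    rw [Finset.sum_range_succ' (fun i => if 1 ≤ i then tP b n (i - 1) else 0) (n + 2)]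
    simp only [Nat.le_add_left, if_true, Nat.add_sub_cancel, Nat.not_succ_le_zero, if_false,
      Nat.lt_irrefl]
    rw [Finset.sum_range_succ (fun i => tP b n i) (n + 1)]
    rw [tP_zero_coeff _ _ _ (cQ_eq_zero _ _ (by omega) (by omega))]
    simp
  rw [hext1, hext2, hshift, Finset.mul_sum, Finset.mul_sum, ← Finset.sum_sub_distrib]
  apply Finset.sum_congr rfl
  intro i hi
  simp only [Finset.mem_range] at hi
  rcases Nat.eq_zero_or_pos i with rfl | hipos
  · rw [if_neg (by omega : ¬ 1 ≤ 0), mul_zero, sub_zero]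
    rw [tP, tP, cQ_zero _ (by omega), cQ_zero _ (by omega)]
    simp only [Nat.sub_zero, mul_zero, Nat.mul_zero]
    rw [pow_succ]
    ring
  · obtain ⟨j, rfl⟩ : ∃ j, i = j + 1 := ⟨i - 1, by omega⟩
    rw [if_pos (by omega : 1 ≤ j + 1), Nat.add_sub_cancel]
    rw [tP, cQ_rec n (j+1) hn (by omega), map_add, add_mul, add_mul]
    have part1 : C (cQ (n+1) (j+1)) * (-(e2p b)) ^ (j+1) * (e1p b) ^ (n + 2 - 2*(j+1))
        = e1p b * tP b (n+1) (j+1) := by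
      rcases le_or_gt (2*(j+1)) (n+1) with h2 | h2
      · rw [tP, show n + 2 - 2*(j+1) = (n + 1 - 2*(j+1)) + 1 by omega, pow_succ]
        ring
      · rw [cQ_eq_zero _ _ (by omega) (by omega),
          tP_zero_coeff _ _ _ (cQ_eq_zero _ _ (by omega) (by omega))]
        simp
    have part2 : C (cQ n j) * (-(e2p b)) ^ (j+1) * (e1p b) ^ (n + 2 - 2*(j+1))
        = - (e2p b * tP b n j) := by
      rcases le_or_gt (2*(j+1)) (n+2) with h2 | h2
      · rw [tP, pow_succ, show n + 2 - 2*(j+1) = n - 2*j by omega]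
        ring
      · rw [cQ_eq_zero _ _ (by omega) (by omega),
          tP_zero_coeff _ _ _ (cQ_eq_zero _ _ (by omega) (by omega))]
        simp
    simp only [Nat.add_sub_cancel]
    rw [part1, part2]
    ring


noncomputable def MqM (b : ℕ) : Matrix (Fin 2) (Fin 2) ℚ[X] :=
  Matrix.of fun g g' => C ((Ncnt b g g' : ℕ) : ℚ) * X ^ (g' : ℕ)

lemma Mq_sq (b : ℕ) : MqM b ^ 2 = e1p b • MqM b - e2p b • (1 : Matrix (Fin 2) (Fin 2) ℚ[X]) := by
  refine Matrix.ext fun i j => ?_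
  fin_cases i <;> fin_cases j <;>
    simp [pow_two, Matrix.mul_apply, Fin.sum_univ_two, MqM, Ncnt, e1p, e2p,
      Matrix.one_apply, map_add, _root_.map_mul, map_ofNat] <;> push_cast <;> ring

lemma trace_rec (b k : ℕ) :
    (MqM b ^ (k + 2)).trace = e1p b * (MqM b ^ (k + 1)).trace - e2p b * (MqM b ^ k).trace := by
  have h : MqM b ^ (k + 2) = e1p b • MqM b ^ (k + 1) - e2p b • MqM b ^ k := by
    calc MqM b ^ (k + 2) = MqM b ^ k * MqM b ^ 2 := by rw [← pow_add]
    _ = MqM b ^ k * (e1p b • MqM b - e2p b • 1) := by rw [Mq_sq]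
    _ = e1p b • (MqM b ^ k * MqM b) - e2p b • (MqM b ^ k * 1) := by
        rw [Matrix.mul_sub, Matrix.mul_smul, Matrix.mul_smul]
    _ = e1p b • MqM b ^ (k + 1) - e2p b • MqM b ^ k := by rw [Matrix.mul_one, ← pow_succ]
  rw [h, Matrix.trace_sub, Matrix.trace_smul, Matrix.trace_smul, smul_eq_mul, smul_eq_mul]

lemma trace_one_eq (b : ℕ) : (MqM b ^ 1).trace = Pn b 1 := by
  have h1 : Pn b 1 = tP b 1 0 + tP b 1 1 := by
    rw [Pn, Finset.sum_range_succ, Finset.sum_range_one]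
  rw [h1, tP_zero_coeff b 1 1 (cQ_eq_zero 1 1 (by omega) (by omega)), add_zero, tP,
    cQ_zero 1 (by omega)]
  rw [pow_one]
  simp [Matrix.trace, MqM, Ncnt, e1p, Fin.sum_univ_two, Matrix.diag]
  ring

lemma trace_two_eq (b : ℕ) : (MqM b ^ 2).trace = Pn b 2 := by
  have h1 : Pn b 2 = tP b 2 0 + tP b 2 1 + tP b 2 2 := by
    rw [Pn, Finset.sum_range_succ, Finset.sum_range_succ, Finset.sum_range_one]
  rw [h1, tP_zero_coeff b 2 2 (cQ_eq_zero 2 2 (by omega) (by omega)), add_zero, tP, tP,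
    cQ_zero 2 (by omega), cQ_one 2 (by omega)]
  rw [pow_two]
  simp [Matrix.trace, Matrix.mul_apply, MqM, Ncnt, e1p, e2p, Fin.sum_univ_two, Matrix.diag,
    map_add, _root_.map_mul, map_ofNat]
  push_cast
  ring

lemma trace_eq_Pn (b : ℕ) : ∀ n, 1 ≤ n → (MqM b ^ n).trace = Pn b n := by
  intro n
  induction n using Nat.strong_induction_on with
  | _ n ih =>
    match n with
    | 0 => exact fun h => absurd h (by omega)
    | 1 => exact fun _ => trace_one_eq b
    | 2 => exact fun _ => trace_two_eq b
    | (k + 3) =>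
      intro _
      rw [show k + 3 = (k + 1) + 2 from rfl, trace_rec, Pn_rec b (k + 1) (by omega),
        ih (k + 2) (by omega) (by omega), ih (k + 1) (by omega) (by omega)]

lemma tP_eq (b N i : ℕ) : tP b N i =
    C (cQ N i * (-(2 * (b:ℚ) + 1)) ^ i * ((b:ℚ) + 1) ^ (N - 2*i)) *
      ((1 + X) ^ (N - 2*i) * X ^ i) := by
  rw [tP, e1p, e2p]
  rw [show -(C (2 * (b:ℚ) + 1) * X) = C (-(2 * (b:ℚ) + 1)) * X by rw [map_neg]; ring]
  rw [mul_pow, mul_pow, ← map_pow, ← map_pow, _root_.map_mul, _root_.map_mul]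
  ring

lemma coeff_tP (b N i m : ℕ) : (tP b N i).coeff m =
    if i ≤ m then
      cQ N i * (-(2 * (b:ℚ) + 1)) ^ i * ((b:ℚ) + 1) ^ (N - 2*i) *
        ((N - 2*i).choose (m - i) : ℚ)
    else 0 := by
  rw [tP_eq, coeff_C_mul, coeff_mul_X_pow', coeff_one_add_X_pow]
  split_ifs with h
  · ring
  · exact mul_zero _

lemma coeff_Pn (b n m : ℕ) (hn : 1 ≤ n) (hm : m ≤ n) : (Pn b n).coeff m =
    ∑ i ∈ Finset.range (min m (n - m) + 1),
      cQ n i * (-(2 * (b:ℚ) + 1)) ^ i * ((b:ℚ) + 1) ^ (n - 2*i) *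
        ((n - 2*i).choose (m - i) : ℚ) := by
  rw [Pn, finset_sum_coeff]
  simp only [coeff_tP]
  rw [← Finset.sum_subset (Finset.range_subset_range.mpr (by omega :
      min m (n - m) + 1 ≤ n + 1))]
  · apply Finset.sum_congr rfl
    intro i hi
    simp only [Finset.mem_range] at hi
    rw [if_pos (by omega : i ≤ m)]
  · intro i hit his
    simp only [Finset.mem_range] at hit his
    rcases le_or_gt i m with him | him
    · rw [if_pos him]
      rcases le_or_gt (2*i) n with h2 | h2
      · rw [Nat.choose_eq_zero_of_lt (by omega)]
        simp
      · rw [cQ_eq_zero n i (by omega) (by omega)]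
        simp
    · rw [if_neg (by omega)]


lemma cwc_eq_coeff (p b n m : ℕ) (hpb : p = 2 * b + 1) [NeZero n] :
    ((closedWalkCount p n m : ℕ) : ℚ) = ((MqM b ^ n).trace).coeff m := by
  rw [count_eq p b n m hpb]
  obtain ⟨k, rfl⟩ : ∃ k, n = k + 1 := ⟨n - 1, by have := NeZero.ne n; omega⟩
  rw [trace_pow_cyclic (MqM b) k]
  have hterm : ∀ δ : Fin (k+1) → Fin 2,
      (∏ t : Fin (k+1), MqM b (δ t) (δ (t+1)))
        = C (((∏ t : Fin (k+1), Ncnt b (δ t) (δ (t+1)) : ℕ) : ℚ)) *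
            X ^ (∑ t : Fin (k+1), ((δ (t+1)) : ℕ)) := by
    intro δ
    simp only [MqM, Matrix.of_apply]
    rw [Finset.prod_mul_distrib, Finset.prod_pow_eq_pow_sum, Nat.cast_prod, map_prod]
  simp only [hterm]
  rw [finset_sum_coeff]
  simp only [coeff_C_mul, coeff_X_pow]
  rw [Finset.sum_filter]
  push_cast
  apply Finset.sum_congr rfl
  intro γ _
  by_cases h : (∑ i : Fin (k+1), ((γ (i+1)) : ℕ)) = m
  · rw [if_pos h, if_pos h.symm, mul_one]
  · rw [if_neg h, if_neg (fun hh => h hh.symm), mul_zero]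

/-- `f(n,m) = Σ_i (n/(n−i))·C(n−i,i)·C(n−2i,m−i)·(−p)^i·((p+1)/2)^{n−2i}`, and
`f(n,m) = f(n,n−m)`. -/
theorem closed_walk_count_formula
    (p : ℕ) (hp : p.Prime) (hodd : Odd p) (n m : ℕ) [NeZero n] (hm : m ≤ n) :
    ((closedWalkCount p n m : ℚ) =
        ∑ i ∈ Finset.range (min m (n - m) + 1),
          (n : ℚ) / ((n : ℚ) - (i : ℚ)) * ((n - i).choose i : ℚ) *
            ((n - 2 * i).choose (m - i) : ℚ) * (-(p : ℚ)) ^ i *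
            ((((p + 1) / 2 : ℕ) : ℚ)) ^ (n - 2 * i)) ∧
      closedWalkCount p n m = closedWalkCount p n (n - m) := by
  obtain ⟨b, hpb⟩ : ∃ b, p = 2 * b + 1 := by
    obtain ⟨t, ht⟩ := hodd; exact ⟨t, by omega⟩
  have hn1 : 1 ≤ n := Nat.one_le_iff_ne_zero.mpr (NeZero.ne n)
  have key : ∀ m' ≤ n, ((closedWalkCount p n m' : ℚ) =
      ∑ i ∈ Finset.range (min m' (n - m') + 1),
        (n : ℚ) / ((n : ℚ) - (i : ℚ)) * ((n - i).choose i : ℚ) *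
          ((n - 2 * i).choose (m' - i) : ℚ) * (-(p : ℚ)) ^ i *
          ((((p + 1) / 2 : ℕ) : ℚ)) ^ (n - 2 * i)) := by
    intro m' hm'
    rw [cwc_eq_coeff p b n m' hpb, trace_eq_Pn b n hn1, coeff_Pn b n m' hn1 hm']
    apply Finset.sum_congr rfl
    intro i _
    have hA : (-(p:ℚ)) = -(2*(b:ℚ)+1) := by rw [hpb]; push_cast; ring
    have hB : (((p + 1) / 2 : ℕ) : ℚ) = (b:ℚ) + 1 := by
      rw [show (p+1)/2 = b + 1 by omega]; push_cast; ring
    rw [hA, hB, cQ]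
    ring
  refine ⟨key m hm, ?_⟩
  have h2 : ((closedWalkCount p n m : ℕ) : ℚ) = ((closedWalkCount p n (n - m) : ℕ) : ℚ) := by
    rw [key m hm, key (n-m) (by omega), Nat.sub_sub_self hm]
    rw [min_comm (n-m) m]
    apply Finset.sum_congr rfl
    intro i hi
    simp only [Finset.mem_range] at hi
    have hcs : (n - 2*i).choose (m - i) = (n - 2*i).choose ((n - m) - i) := by
      have h1 : (n - m) - i = (n - 2*i) - (m - i) := by omega
      rw [h1]
      exact (Nat.choose_symm (by omega : m - i ≤ n - 2*i)).symm
    rw [hcs]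
  exact_mod_cast h2
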